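/- Let λ > 1, s₀ = π/√(λ²−1), σ ∈ [0, s₀], α₃(s) = log(λ − cos(s√(λ²−1))), and f(s) = sin(πs/(2s₀) + (π/2)(1 − σ/s₀)) · e^{−α₃(s)/2}. Then ∫_{−s₀+σ}^{s₀+σ} f'(s)² e^{α₃(s)} ds = (π/4)(λ + cos(σ√(λ²−1))). -/

import Mathlib

open Real


set_option maxHeartbeats 1000000 in
lemma key2 (lam k su cu C S c sn : ℝ) (hscu : su^2+cu^2=1) (hCS : S^2+C^2=1)
    (hc : c = (2*cu^2-1)*C - 2*su*cu*S) (hs : sn = 2*su*cu*C+(2*cu^2-1)*S) (hD : lam - c ≠ 0) :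
    (k/2*su + sn*k/(lam-c)/2*cu)^2 =
      k^2/8*(1-c*C-sn*S) + k^2*sn*(sn*C-c*S)/(4*(lam-c)) + k^2*sn^2*(1+c*C+sn*S)/(8*(lam-c)^2) := by
  have h1 : c*C + sn*S = 2*cu^2-1 := by linear_combination C*hc + S*hs + (2*cu^2-1)*hCS
  have h2 : sn*C-c*S = 2*su*cu := by linear_combination C*hs - S*hc + (2*su*cu)*hCS
  have h3 : 1-c*C-sn*S = 2*su^2 := by linear_combination (-1:ℝ)*h1 - 2*hscu
  have h4 : 1+c*C+sn*S = 2*cu^2 := by linear_combination h1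
  rw [h3, h2, h4]
  field_simp
  ring

set_option maxHeartbeats 1000000 in
lemma key1 (lam k c sn C S : ℝ) (hk2 : k^2 = lam^2-1) (hsc : sn^2+c^2=1)
    (hD : lam - c ≠ 0) (hQ : 1-(lam-k)*c ≠ 0) :
    k^2/8*(1-c*C-sn*S) + k^2*sn*(sn*C-c*S)/(4*(lam-c)) + k^2*sn^2*(1+c*C+sn*S)/(8*(lam-c)^2) =
    -(k / 4) *
        (((1 + lam * C) / 2 * (c * k) * (lam - c) -
            (-(k ^ 2 / 2) * S + (1 + lam * C) / 2 * sn) * (sn * k)) /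
          (lam - c) ^ 2) +
      (lam + C) / 8 *
        (k +
          2 *
            (1 / (1 + ((lam - k) * sn / (1 - (lam - k) * c)) ^ 2) *
              (((lam - k) * (c * k) * (1 - (lam - k) * c) -
                  (lam - k) * sn * -((lam - k) * (-sn * k))) /
                (1 - (lam - k) * c) ^ 2))) := by
  have h1w : 1 + ((lam - k) * sn / (1 - (lam - k) * c)) ^ 2 ≠ 0 := by positivity
  have ht : lam - k ≠ 0 := by
    intro h; have : k = lam := by linarith
    rw [this] at hk2; linarith
  have hQ2 : (1 - (lam - k) * c) ^ 2 ≠ 0 := pow_ne_zero _ hQ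
  have hden : 1 + ((lam - k) * sn / (1 - (lam - k) * c)) ^ 2 = 2*(lam-k)*(lam-c) / (1 - (lam - k) * c) ^ 2 := by
    rw [div_pow, one_add_div hQ2]; congr 1; linear_combination hk2 + (lam-k)^2*hsc
  have hN : ((lam - k) * (c * k) * (1 - (lam - k) * c) - (lam - k) * sn * -((lam - k) * (-sn * k))) = (lam-k)*k*(c-(lam-k)) := by
    linear_combination (-(lam-k)^2*k)*hsc
  have eL : k^2/8*(1-c*C-sn*S) + k^2*sn*(sn*C-c*S)/(4*(lam-c)) + k^2*sn^2*(1+c*C+sn*S)/(8*(lam-c)^2) =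
      k^2*((1-c*C-sn*S)*(lam-c)^2 + 2*sn*(sn*C-c*S)*(lam-c) + sn^2*(1+c*C+sn*S))/(8*(lam-c)^2) := by
    field_simp; ring
  have P : (1-c*C-sn*S)*(lam-c)^2 + 2*sn*(sn*C-c*S)*(lam-c) + sn^2*(1+c*C+sn*S) =
      -(1+lam*C)*c*(lam-c) - k^2*S*sn + (1+lam*C)*sn^2 + (lam+C)*(lam-c) := by
    linear_combination (S*sn)*hk2 + (S*sn + C*(lam-c))*hsc
  have harc : 1 / (2*(lam-k)*(lam-c) / (1 - (lam - k) * c) ^ 2) * ((lam-k)*k*(c-(lam-k)) / (1 - (lam - k) * c) ^ 2) =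
      k*(c-(lam-k))/(2*(lam-c)) := by
    rw [one_div_div, div_mul_div_comm, mul_comm ((1 - (lam - k) * c) ^ 2), mul_div_mul_right _ _ hQ2]
    field_simp
  rw [eL, P, hden, hN, harc]
  field_simp
  ring

set_option maxHeartbeats 1000000 in
theorem stmt_6 (lam : ℝ) (hlam : 1 < lam)
    (s₀ σ : ℝ) (hs₀ : s₀ = π / Real.sqrt (lam ^ 2 - 1))
    (hσ : σ ∈ Set.Icc 0 s₀)
    (a3 f : ℝ → ℝ)
    (ha3 : ∀ s, a3 s = Real.log (lam - Real.cos (s * Real.sqrt (lam ^ 2 - 1))))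
    (hf : ∀ s, f s = Real.sin (π * s / (2 * s₀) + (π / 2) * (1 - σ / s₀)) * Real.exp (-(a3 s) / 2)) :
    ∫ s in (-s₀ + σ)..(s₀ + σ), (deriv f s) ^ 2 * Real.exp (a3 s) =
      (π / 4) * (lam + Real.cos (σ * Real.sqrt (lam ^ 2 - 1))) := by
  set k := Real.sqrt (lam ^ 2 - 1) with hkdef
  have hl0 : (0:ℝ) < lam ^ 2 - 1 := by nlinarith
  have hk2 : k ^ 2 = lam ^ 2 - 1 := Real.sq_sqrt hl0.le
  have hkpos : 0 < k := Real.sqrt_pos.mpr hl0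
  have hπ : (0:ℝ) < π := Real.pi_pos
  have hDpos : ∀ x : ℝ, 0 < lam - Real.cos x := fun x => by
    have := Real.cos_le_one x; linarith
  have hklam : k < lam := by nlinarith [hk2, hkpos]
  have hprod : (lam - k) * (lam + k) = 1 := by linear_combination (-1 : ℝ) * hk2
  have htpos : 0 < lam - k := by linarith
  have ht1 : lam - k < 1 := by nlinarith [hprod]
  have hQpos : ∀ x : ℝ, 0 < 1 - (lam - k) * Real.cos x := fun x => by
    nlinarith [Real.cos_le_one x, Real.neg_one_le_cos x]
  -- basic derivatives
  have hsinD : ∀ s : ℝ, HasDerivAt (fun s => Real.sin (s * k)) (Real.cos (s * k) * k) s :=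
    fun s => by have := (Real.hasDerivAt_sin (s * k)).comp s (hasDerivAt_mul_const (x := s) k); exact this
  have hcosD : ∀ s : ℝ, HasDerivAt (fun s => Real.cos (s * k)) (-Real.sin (s * k) * k) s :=
    fun s => by have := (Real.hasDerivAt_cos (s * k)).comp s (hasDerivAt_mul_const (x := s) k); exact this
  have hDder : ∀ s : ℝ, HasDerivAt (fun s => lam - Real.cos (s * k)) (Real.sin (s * k) * k) s :=
    fun s => by simpa using (hcosD s).const_sub lam
  have ha3e : a3 = fun s => Real.log (lam - Real.cos (s * k)) := funext ha3
  have ha3d : ∀ s : ℝ, HasDerivAt a3 (Real.sin (s * k) * k / (lam - Real.cos (s * k))) s :=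
    fun s => by rw [ha3e]; exact (hDder s).log (hDpos _).ne'
  have hhalf : π / (2 * s₀) = k / 2 := by
    rw [hs₀]; field_simp
  have hL : ∀ s : ℝ, π * s / (2 * s₀) + π / 2 * (1 - σ / s₀) = k / 2 * (s - σ) + π / 2 := by
    intro s; rw [hs₀]; field_simp; ring
  set X : ℝ → ℝ := fun s =>
    k / 2 * Real.sin (k / 2 * (s - σ)) +
      Real.sin (s * k) * k / (lam - Real.cos (s * k)) / 2 * Real.cos (k / 2 * (s - σ)) with hXdef
  have hfd : ∀ s : ℝ, HasDerivAt f (-(X s * Real.exp (-(a3 s) / 2))) s := by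
    intro s
    rw [funext hf]
    have h1 : HasDerivAt (fun s : ℝ => π * s / (2 * s₀) + π / 2 * (1 - σ / s₀)) (π / (2 * s₀)) s := by
      simpa using ((hasDerivAt_id' (x := s)).const_mul π).div_const (2 * s₀) |>.add_const (π / 2 * (1 - σ / s₀))
    have h2 : HasDerivAt (fun s : ℝ => Real.exp (-(a3 s) / 2))
        (-(Real.sin (s * k) * k / (lam - Real.cos (s * k))) / 2 * Real.exp (-(a3 s) / 2)) s := by
      have := (((ha3d s).neg).div_const 2).exp
      simpa [mul_comm] using this
    have h3 := (h1.sin).mul h2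
    refine h3.congr_deriv ?_
    rw [hL s, Real.sin_add_pi_div_two, Real.cos_add_pi_div_two, hhalf, hXdef]
    ring
  have hinteg : ∀ s : ℝ, (deriv f s) ^ 2 * Real.exp (a3 s) = X s ^ 2 := by
    intro s
    rw [(hfd s).deriv]
    have hE : Real.exp (-(a3 s) / 2) ^ 2 * Real.exp (a3 s) = 1 := by
      rw [← Real.exp_nat_mul, ← Real.exp_add, show ((2:ℕ):ℝ) * (-(a3 s) / 2) + a3 s = 0 by push_cast; ring, Real.exp_zero]
    calc (-(X s * Real.exp (-(a3 s) / 2))) ^ 2 * Real.exp (a3 s)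
        = X s ^ 2 * (Real.exp (-(a3 s) / 2) ^ 2 * Real.exp (a3 s)) := by ring
      _ = X s ^ 2 := by rw [hE, mul_one]
  set F : ℝ → ℝ := fun s =>
    -(k / 4) * ((-(k ^ 2 / 2) * Real.sin (σ * k) + (1 + lam * Real.cos (σ * k)) / 2 * Real.sin (s * k)) /
        (lam - Real.cos (s * k))) +
      (lam + Real.cos (σ * k)) / 8 *
        (s * k + 2 * Real.arctan ((lam - k) * Real.sin (s * k) / (1 - (lam - k) * Real.cos (s * k)))) with hFdef
  have hFd : ∀ s : ℝ, HasDerivAt F (X s ^ 2) s := by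
    intro s
    have hDne : (lam - Real.cos (s * k)) ≠ 0 := (hDpos _).ne'
    have hQne : (1 - (lam - k) * Real.cos (s * k)) ≠ 0 := (hQpos _).ne'
    have num1 : HasDerivAt (fun s : ℝ => -(k ^ 2 / 2) * Real.sin (σ * k) +
        (1 + lam * Real.cos (σ * k)) / 2 * Real.sin (s * k))
        ((1 + lam * Real.cos (σ * k)) / 2 * (Real.cos (s * k) * k)) s :=
      ((hsinD s).const_mul _).const_add _
    have part1 := (num1.div (hDder s) hDne).const_mul (-(k / 4))
    have wnum := (hsinD s).const_mul (lam - k)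
    have wden := ((hcosD s).const_mul (lam - k)).const_sub 1
    have warc := (wnum.div wden hQne).arctan
    have part2 := ((hasDerivAt_mul_const (x := s) k).add (warc.const_mul 2)).const_mul
      ((lam + Real.cos (σ * k)) / 8)
    have total := part1.add part2
    refine total.congr_deriv ?_
    symm
    have h1w : 1 + ((lam - k) * Real.sin (s * k) / (1 - (lam - k) * Real.cos (s * k))) ^ 2 ≠ 0 := by positivity
    have hsc : Real.sin (s * k) ^ 2 + Real.cos (s * k) ^ 2 = 1 := Real.sin_sq_add_cos_sq _
    have hscu : Real.sin (k / 2 * (s - σ)) ^ 2 + Real.cos (k / 2 * (s - σ)) ^ 2 = 1 :=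
      Real.sin_sq_add_cos_sq _
    have hCS : Real.sin (σ * k) ^ 2 + Real.cos (σ * k) ^ 2 = 1 := Real.sin_sq_add_cos_sq _
    have hcc : Real.cos (s * k) = (2 * Real.cos (k / 2 * (s - σ)) ^ 2 - 1) * Real.cos (σ * k) -
        2 * Real.sin (k / 2 * (s - σ)) * Real.cos (k / 2 * (s - σ)) * Real.sin (σ * k) := by
      rw [show s * k = 2 * (k / 2 * (s - σ)) + σ * k by ring, Real.cos_add, Real.cos_two_mul,
        Real.sin_two_mul]
    have hss : Real.sin (s * k) = 2 * Real.sin (k / 2 * (s - σ)) * Real.cos (k / 2 * (s - σ)) * Real.cos (σ * k) +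
        (2 * Real.cos (k / 2 * (s - σ)) ^ 2 - 1) * Real.sin (σ * k) := by
      rw [show s * k = 2 * (k / 2 * (s - σ)) + σ * k by ring, Real.sin_add, Real.cos_two_mul,
        Real.sin_two_mul]
    show (k / 2 * Real.sin (k / 2 * (s - σ)) + Real.sin (s * k) * k / (lam - Real.cos (s * k)) / 2 * Real.cos (k / 2 * (s - σ))) ^ 2 = _
    rw [key2 lam k (Real.sin (k / 2 * (s - σ))) (Real.cos (k / 2 * (s - σ)))
      (Real.cos (σ * k)) (Real.sin (σ * k)) (Real.cos (s * k)) (Real.sin (s * k))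
      hscu hCS hcc hss hDne]
    exact key1 lam k (Real.cos (s * k)) (Real.sin (s * k)) (Real.cos (σ * k)) (Real.sin (σ * k))
      hk2 hsc hDne hQne
  have hcont : Continuous X := by
    apply Continuous.add
    · fun_prop
    · apply Continuous.mul
      · apply Continuous.div_const
        exact Continuous.div (by fun_prop) (by fun_prop) fun x => (hDpos _).ne'
      · fun_prop
  have key := intervalIntegral.integral_eq_sub_of_hasDerivAt (a := -s₀ + σ) (b := s₀ + σ)
    (f := F) (f' := fun s => X s ^ 2) (fun s _ => hFd s)
    ((hcont.pow 2).intervalIntegrable _ _)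
  simp only [hinteg]
  rw [key, hFdef]
  have e1 : (s₀ + σ) * k = π + σ * k := by rw [hs₀]; field_simp
  have e2 : (-s₀ + σ) * k = -π + σ * k := by rw [hs₀]; field_simp
  simp only [e1, e2]
  rw [show (-π + σ * k) = σ * k - π by ring]
  rw [Real.sin_add, Real.cos_add, Real.sin_sub, Real.cos_sub, Real.sin_pi, Real.cos_pi]
  ring
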